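/- Let λ > 0 and y ∈ ℝ^M, and let x⋆ be a minimizer of problem (P). Suppose the norm A is decomposable at L* x⋆ with data (T, e), and set S := T⊥. Suppose V and W are mutually orthogonal subspaces of ℝ^P with S = V ⊕ W, and that A is separable on S: for every u ∈ ℝ^P, A(P_S u) = A(P_V u) + A(P_W u). Assume the source condition SC(x⋆) holds with (η, α) and that A*(P_V α) < 1, and assume Φ is injective on ker(L_V*), i.e. ker(Φ) ∩ ker(P_V ∘ L*) = {0}. Then x⋆ is the unique minimizer of (P). -/

import Mathlib

open RealInnerProductSpace

noncomputable section

abbrev Euc (n : ℕ) := EuclideanSpace ℝ (Fin n)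

def proj {n : ℕ} (V : Submodule ℝ (Euc n)) : Euc n →L[ℝ] Euc n :=
  V.subtypeL.comp (Submodule.orthogonalProjection V)

def dualNorm {n : ℕ} (A : Euc n → ℝ) (α : Euc n) : ℝ :=
  sSup {r : ℝ | ∃ v : Euc n, A v ≤ 1 ∧ r = ⟪α, v⟫}

def subdiff {n : ℕ} (f : Euc n → ℝ) (x : Euc n) : Set (Euc n) :=
  {g : Euc n | ∀ y : Euc n, f x + ⟪g, y - x⟫ ≤ f y}

def IsNorm {n : ℕ} (A : Euc n → ℝ) : Prop :=
  (∀ x, A x = 0 ↔ x = 0) ∧ (∀ (c : ℝ) (x : Euc n), A (c • x) = |c| * A x) ∧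
    (∀ x y, A (x + y) ≤ A x + A y)

def Decomposable {n : ℕ} (A : Euc n → ℝ) (u : Euc n) (T : Submodule ℝ (Euc n)) (e : Euc n) :
    Prop :=
  e ∈ T ∧
  subdiff A u = {α : Euc n | proj T α = e ∧ dualNorm A (proj Tᗮ α) ≤ 1} ∧
  ∀ z : Euc n, z ∈ Tᗮ →
    A z = sSup {r : ℝ | ∃ v ∈ (Tᗮ : Submodule ℝ (Euc n)), dualNorm A v ≤ 1 ∧ r = ⟪v, z⟫}

def obj {N M P : ℕ} (Φ : Euc N →L[ℝ] Euc M) (L : Euc P →L[ℝ] Euc N) (A : Euc P → ℝ)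
    (y : Euc M) (lam : ℝ) (x : Euc N) : ℝ :=
  (1/2) * ‖y - Φ x‖^2 + lam * A (ContinuousLinearMap.adjoint L x)

def SC {N M P : ℕ} (Φ : Euc N →L[ℝ] Euc M) (L : Euc P →L[ℝ] Euc N) (A : Euc P → ℝ)
    (x : Euc N) (η : Euc M) (α : Euc P) : Prop :=
  α ∈ subdiff A (ContinuousLinearMap.adjoint L x) ∧
  ContinuousLinearMap.adjoint Φ η = L α ∧
  L α ∈ subdiff (fun z => A (ContinuousLinearMap.adjoint L z)) x

def breg {n : ℕ} (A : Euc n → ℝ) (α u u₀ : Euc n) : ℝ :=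
  A u - A u₀ - ⟪α, u - u₀⟫


lemma coord_le (n : ℕ) (v : EuclideanSpace ℝ (Fin n)) (i : Fin n) : |v i| ≤ ‖v‖ := by
  have h : v i = ⟪EuclideanSpace.single i (1:ℝ), v⟫ := by
    simp [EuclideanSpace.inner_single_left]
  rw [h]
  calc |⟪EuclideanSpace.single i (1:ℝ), v⟫| ≤ ‖EuclideanSpace.single i (1:ℝ)‖ * ‖v‖ :=
        abs_real_inner_le_norm _ _
    _ = ‖v‖ := by rw [EuclideanSpace.norm_single]; simp

section lemmas
variable {n : ℕ} {A : Euc n → ℝ}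

lemma IsNorm.zero (hA : IsNorm A) : A 0 = 0 := (hA.1 0).mpr rfl

lemma IsNorm.nonneg (hA : IsNorm A) (v : Euc n) : 0 ≤ A v := by
  have h := hA.2.2 v (-v)
  have h2 : A (-v) = A v := by
    have := hA.2.1 (-1) v; simpa using this
  have : A 0 ≤ A v + A v := by simpa [h2] using h
  rw [hA.zero] at this; linarith

lemma IsNorm.upper (hA : IsNorm A) : ∃ C > 0, ∀ v : Euc n, A v ≤ C * ‖v‖ := by
  classical
  set b := EuclideanSpace.basisFun (Fin n) ℝ
  have hnn : (0:ℝ) ≤ ∑ i, A (b i) := Finset.sum_nonneg fun i _ => hA.nonneg _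
  refine ⟨(∑ i, A (b i)) + 1, by linarith, fun v => ?_⟩
  have hrep : v = ∑ i, v i • b i := by
    have := b.sum_repr v
    simpa [b, EuclideanSpace.basisFun_repr] using this.symm
  have hsum : ∀ (s : Finset (Fin n)), A (∑ i ∈ s, v i • b i) ≤ ∑ i ∈ s, |v i| * A (b i) := by
    intro s
    induction s using Finset.cons_induction with
    | empty => simp [hA.zero]
    | cons a s ha ih =>
        rw [Finset.sum_cons, Finset.sum_cons]
        calc A (v a • b a + ∑ i ∈ s, v i • b i) ≤ A (v a • b a) + A (∑ i ∈ s, v i • b i) :=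
              hA.2.2 _ _
          _ ≤ |v a| * A (b a) + ∑ i ∈ s, |v i| * A (b i) := by
              rw [hA.2.1]; linarith
  calc A v = A (∑ i, v i • b i) := by rw [← hrep]
    _ ≤ ∑ i, |v i| * A (b i) := hsum _
    _ ≤ ∑ i, ‖v‖ * A (b i) := by
        refine Finset.sum_le_sum fun i _ => ?_
        exact mul_le_mul_of_nonneg_right
          (coord_le n v i) (hA.nonneg _)
    _ = (∑ i, A (b i)) * ‖v‖ := by rw [← Finset.mul_sum, mul_comm]
    _ ≤ ((∑ i, A (b i)) + 1) * ‖v‖ := by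
        apply mul_le_mul_of_nonneg_right _ (norm_nonneg _); linarith

lemma IsNorm.continuous (hA : IsNorm A) : Continuous A := by
  obtain ⟨C, hC, hCb⟩ := hA.upper
  have key : ∀ x y : Euc n, A x - A y ≤ C * ‖x - y‖ := by
    intro x y
    have h := hA.2.2 (x - y) y
    simp only [sub_add_cancel] at h
    linarith [hCb (x - y)]
  have : LipschitzWith (Real.toNNReal C) A := by
    refine LipschitzWith.of_dist_le_mul fun x y => ?_
    rw [Real.dist_eq, dist_eq_norm, Real.coe_toNNReal C hC.le, abs_le]
    have h2 := key y x
    rw [← norm_neg, neg_sub] at h2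
    exact ⟨by linarith, key x y⟩
  exact this.continuous

end lemmas

section lemmas2
variable {n : ℕ} {A : Euc n → ℝ}

lemma IsNorm.lower (hA : IsNorm A) : ∃ m > 0, ∀ v : Euc n, m * ‖v‖ ≤ A v := by
  by_cases hne : (Metric.sphere (0 : Euc n) 1).Nonempty
  · have hcpt : IsCompact (Metric.sphere (0 : Euc n) 1) := isCompact_sphere 0 1
    obtain ⟨z, hz, hzmin⟩ := hcpt.exists_isMinOn hne hA.continuous.continuousOn
    have hz1 : ‖z‖ = 1 := by simpa using hz
    have hzne : z ≠ 0 := by intro h; rw [h] at hz1; simp at hz1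
    have hAz : 0 < A z := by
      rcases lt_or_eq_of_le (hA.nonneg z) with h | h
      · exact h
      · exact absurd ((hA.1 z).mp h.symm) hzne
    refine ⟨A z, hAz, fun v => ?_⟩
    by_cases hv : v = 0
    · simp [hv, hA.zero]
    · have hnv : (0:ℝ) < ‖v‖ := norm_pos_iff.mpr hv
      have hmem : ‖v‖⁻¹ • v ∈ Metric.sphere (0 : Euc n) 1 := by
        simp [norm_smul, abs_of_pos (inv_pos.mpr hnv), inv_mul_cancel₀ hnv.ne']
      have := hzmin hmem
      have h2 : A (‖v‖⁻¹ • v) = ‖v‖⁻¹ * A v := by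
        rw [hA.2.1]; rw [abs_of_pos (inv_pos.mpr hnv)]
      simp only [IsMinOn, IsMinFilter] at this
      have h3 : A z ≤ ‖v‖⁻¹ * A v := by rw [← h2]; exact this
      calc A z * ‖v‖ ≤ (‖v‖⁻¹ * A v) * ‖v‖ := by nlinarith
        _ = A v := by field_simp
  · refine ⟨1, one_pos, fun v => ?_⟩
    by_cases hv : v = 0
    · simp [hv, hA.zero]
    · exfalso
      exact hne ⟨‖v‖⁻¹ • v, by
        have hnv : (0:ℝ) < ‖v‖ := norm_pos_iff.mpr hv
        simp [norm_smul, abs_of_pos (inv_pos.mpr hnv), inv_mul_cancel₀ hnv.ne']⟩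

end lemmas2

section lemmas3
variable {n : ℕ} {A : Euc n → ℝ}

lemma dualSet_bddAbove (hA : IsNorm A) (β : Euc n) :
    BddAbove {r : ℝ | ∃ v : Euc n, A v ≤ 1 ∧ r = ⟪β, v⟫} := by
  obtain ⟨m, hm, hmb⟩ := hA.lower
  refine ⟨‖β‖ * m⁻¹, fun r hr => ?_⟩
  obtain ⟨v, hv1, rfl⟩ := hr
  have h1 : ‖v‖ ≤ m⁻¹ := by
    have h := hmb v
    rw [show m⁻¹ = 1 / m from (one_div m).symm, le_div_iff₀ hm]
    nlinarith
  calc ⟪β, v⟫ ≤ ‖β‖ * ‖v‖ := real_inner_le_norm _ _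
    _ ≤ ‖β‖ * m⁻¹ := mul_le_mul_of_nonneg_left h1 (norm_nonneg _)

lemma dualSet_nonempty (hA : IsNorm A) (β : Euc n) :
    (0:ℝ) ∈ {r : ℝ | ∃ v : Euc n, A v ≤ 1 ∧ r = ⟪β, v⟫} :=
  ⟨0, by rw [hA.zero]; norm_num, by simp⟩

lemma le_dualNorm (hA : IsNorm A) (β v : Euc n) (hv : A v ≤ 1) : ⟪β, v⟫ ≤ dualNorm A β :=
  le_csSup (dualSet_bddAbove hA β) ⟨v, hv, rfl⟩

lemma dualNorm_nonneg (hA : IsNorm A) (β : Euc n) : 0 ≤ dualNorm A β :=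
  le_csSup (dualSet_bddAbove hA β) (dualSet_nonempty hA β)

lemma inner_le_dualNorm_mul (hA : IsNorm A) (β u : Euc n) : ⟪β, u⟫ ≤ dualNorm A β * A u := by
  by_cases hu : u = 0
  · simp [hu, hA.zero]
  · have hAu : 0 < A u := by
      rcases lt_or_eq_of_le (hA.nonneg u) with h | h
      · exact h
      · exact absurd ((hA.1 u).mp h.symm) hu
    have hv : A ((A u)⁻¹ • u) ≤ 1 := by
      rw [hA.2.1, abs_of_pos (inv_pos.mpr hAu), inv_mul_cancel₀ hAu.ne']
    have := le_dualNorm hA β _ hv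
    rw [real_inner_smul_right] at this
    calc ⟪β, u⟫ = ((A u)⁻¹ * ⟪β, u⟫) * A u := by field_simp
      _ ≤ dualNorm A β * A u := mul_le_mul_of_nonneg_right this hAu.le

lemma norm_le_of_dualNorm_le (hA : IsNorm A) {C : ℝ} (hC : 0 < C)
    (hCb : ∀ w : Euc n, A w ≤ C * ‖w‖) {v : Euc n} (hv : dualNorm A v ≤ 1) : ‖v‖ ≤ C := by
  by_cases h0 : v = 0
  · simp [h0, hC.le]
  · have hnv : (0:ℝ) < ‖v‖ := norm_pos_iff.mpr h0
    have hw : A ((C * ‖v‖)⁻¹ • v) ≤ 1 := by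
      rw [hA.2.1, abs_of_pos (by positivity)]
      calc (C * ‖v‖)⁻¹ * A v ≤ (C * ‖v‖)⁻¹ * (C * ‖v‖) :=
            mul_le_mul_of_nonneg_left (hCb v) (by positivity)
        _ = 1 := by field_simp
    have h1 := le_dualNorm hA v _ hw
    rw [real_inner_smul_right, real_inner_self_eq_norm_sq] at h1
    have : (C * ‖v‖)⁻¹ * ‖v‖^2 ≤ 1 := le_trans h1 hv
    rw [inv_mul_le_iff₀ (by positivity)] at this
    nlinarith

lemma decompSet_bddAbove (hA : IsNorm A) (T : Submodule ℝ (Euc n)) (z : Euc n) :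
    BddAbove {r : ℝ | ∃ v ∈ T, dualNorm A v ≤ 1 ∧ r = ⟪v, z⟫} := by
  obtain ⟨C, hC, hCb⟩ := hA.upper
  refine ⟨C * ‖z‖, fun r hr => ?_⟩
  obtain ⟨v, _, hv1, rfl⟩ := hr
  calc ⟪v, z⟫ ≤ ‖v‖ * ‖z‖ := real_inner_le_norm _ _
    _ ≤ C * ‖z‖ := mul_le_mul_of_nonneg_right
        (norm_le_of_dualNorm_le hA hC hCb hv1) (norm_nonneg _)

end lemmas3

section projlem
variable {n : ℕ}

lemma proj_mem (V : Submodule ℝ (Euc n)) (u : Euc n) : proj V u ∈ V := by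
  simp [proj]

lemma proj_eq_self {V : Submodule ℝ (Euc n)} {u : Euc n} (hu : u ∈ V) : proj V u = u := by
  simp [proj, Submodule.starProjection_eq_self_iff.mpr hu]

lemma proj_eq_zero {V : Submodule ℝ (Euc n)} {u : Euc n} (hu : u ∈ Vᗮ) : proj V u = 0 := by
  simp [proj, Submodule.orthogonalProjectionOnto_apply_of_mem_orthogonal hu]

lemma sub_proj_inner {V : Submodule ℝ (Euc n)} (u : Euc n) {v : Euc n} (hv : v ∈ V) :
    ⟪u - proj V u, v⟫ = 0 := by
  have h : u - proj V u ∈ Vᗮ := Submodule.sub_starProjection_mem_orthogonal u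
  rw [real_inner_comm]; exact h v hv

lemma inner_proj_left_eq_right (V : Submodule ℝ (Euc n)) (a b : Euc n) :
    ⟪proj V a, b⟫ = ⟪a, proj V b⟫ :=
  Submodule.inner_starProjection_left_eq_right (K := V) a b

lemma proj_add_proj_orthogonal (V : Submodule ℝ (Euc n)) (u : Euc n) :
    proj V u + proj Vᗮ u = u :=
  Submodule.starProjection_add_starProjection_orthogonal (K := V) u

lemma proj_sup_eq {V W S : Submodule ℝ (Euc n)}
    (horth : ∀ v ∈ V, ∀ w ∈ W, ⟪v, w⟫ = (0:ℝ)) (hsum : V ⊔ W = S) (u : Euc n) :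
    proj S u = proj V u + proj W u := by
  have hVS : V ≤ S := hsum ▸ le_sup_left
  have hWS : W ≤ S := hsum ▸ le_sup_right
  have hmem : proj V u + proj W u ∈ S := S.add_mem (hVS (proj_mem V u)) (hWS (proj_mem W u))
  have key : ∀ w ∈ S, ⟪u - (proj V u + proj W u), w⟫ = 0 := by
    intro w hw
    rw [← hsum] at hw
    obtain ⟨a, ha, b, hb, rfl⟩ := Submodule.mem_sup.mp hw
    have h1 : ⟪u - proj V u, a⟫ = 0 := sub_proj_inner u ha
    have h2 : ⟪u - proj W u, b⟫ = 0 := sub_proj_inner u hb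
    have h3 : ⟪proj W u, a⟫ = 0 := by
      rw [real_inner_comm]; exact horth a ha _ (proj_mem W u)
    have h4 : ⟪proj V u, b⟫ = 0 := horth _ (proj_mem V u) b hb
    have e1 : ⟪u - (proj V u + proj W u), a⟫ = 0 := by
      rw [show u - (proj V u + proj W u) = (u - proj V u) - proj W u by abel,
        inner_sub_left, h1, h3]; ring
    have e2 : ⟪u - (proj V u + proj W u), b⟫ = 0 := by
      rw [show u - (proj V u + proj W u) = (u - proj W u) - proj V u by abel,
        inner_sub_left, h2, h4]; ring
    rw [inner_add_right, e1, e2]; ring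

  have heq := Submodule.eq_starProjection_of_mem_of_inner_eq_zero (K := S) (u := u) hmem key
  simpa [proj] using heq

lemma inner_eq_inner_proj {S : Submodule ℝ (Euc n)} {v : Euc n} (hv : v ∈ S) (z : Euc n) :
    ⟪v, z⟫ = ⟪v, proj S z⟫ := by
  have h : ⟪z - proj S z, v⟫ = 0 := sub_proj_inner z hv
  rw [inner_sub_left] at h
  have h1 : ⟪z, v⟫ = ⟪proj S z, v⟫ := by linarith
  calc ⟪v, z⟫ = ⟪z, v⟫ := real_inner_comm _ _
    _ = ⟪proj S z, v⟫ := h1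
    _ = ⟪v, proj S z⟫ := real_inner_comm _ _

end projlem


section fit
variable {N M P : ℕ} (Φ : Euc N →L[ℝ] Euc M) (L : Euc P →L[ℝ] Euc N) (A : Euc P → ℝ)

lemma equal_fit (hA : IsNorm A) {lam : ℝ} (hlam : 0 < lam) (y : Euc M) {x xs : Euc N}
    (hmin : ∀ z, obj Φ L A y lam xs ≤ obj Φ L A y lam z)
    (hmin' : ∀ z, obj Φ L A y lam x ≤ obj Φ L A y lam z) :
    Φ x = Φ xs ∧ A (ContinuousLinearMap.adjoint L x) = A (ContinuousLinearMap.adjoint L xs) := by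
  set L' := ContinuousLinearMap.adjoint L with hL'
  have hobj : obj Φ L A y lam x = obj Φ L A y lam xs :=
    le_antisymm (hmin' xs) (hmin x)
  set a := y - Φ x with ha
  set b := y - Φ xs with hb
  set mid := (1/2 : ℝ) • (x + xs) with hmid
  have hΦmid : y - Φ mid = (1/2 : ℝ) • (a + b) := by
    simp only [hmid, map_smul, map_add, ha, hb]
    module
  have hq : ‖y - Φ mid‖^2 = (‖a‖^2 + ‖b‖^2)/2 - (1/4) * ‖a - b‖^2 := by
    rw [hΦmid, norm_smul]
    have h1 : ‖a + b‖^2 = ‖a‖^2 + 2*⟪a,b⟫ + ‖b‖^2 := norm_add_sq_real a b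
    have h2 : ‖a - b‖^2 = ‖a‖^2 - 2*⟪a,b⟫ + ‖b‖^2 := norm_sub_sq_real a b
    have : (‖(1/2:ℝ)‖ * ‖a + b‖)^2 = (1/4) * ‖a+b‖^2 := by
      rw [Real.norm_eq_abs]; ring_nf
    rw [this, h1]; linarith
  have hAmid : A (L' mid) ≤ (A (L' x) + A (L' xs))/2 := by
    have : L' mid = (1/2:ℝ) • (L' x + L' xs) := by
      simp only [hmid, map_smul, map_add]
    rw [this]
    calc A ((1/2:ℝ) • (L' x + L' xs)) = |1/2| * A (L' x + L' xs) := hA.2.1 _ _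
      _ ≤ |1/2| * (A (L' x) + A (L' xs)) := by
          apply mul_le_mul_of_nonneg_left (hA.2.2 _ _) (abs_nonneg _)
      _ = (A (L' x) + A (L' xs))/2 := by rw [abs_of_pos]; ring; norm_num
  have hcmp := hmin mid
  have hexp : obj Φ L A y lam mid ≤ obj Φ L A y lam xs - (1/8) * ‖a - b‖^2 := by
    simp only [obj, hq]
    have hx : obj Φ L A y lam x = (1/2) * ‖a‖^2 + lam * A (L' x) := rfl
    have hxs : obj Φ L A y lam xs = (1/2) * ‖b‖^2 + lam * A (L' xs) := rfl
    have hAm := mul_le_mul_of_nonneg_left hAmid hlam.le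
    rw [hx, hxs] at hobj
    rw [← hL', ← hb]
    linarith
  have hab : ‖a - b‖^2 ≤ 0 := by linarith
  have hab0 : a - b = 0 := by
    have := sq_nonneg ‖a - b‖
    have h0 : ‖a - b‖^2 = 0 := le_antisymm hab this
    have := pow_eq_zero_iff (n := 2) (by norm_num) |>.mp h0
    exact norm_eq_zero.mp this
  have hΦeq : Φ x = Φ xs := by
    have h : a = b := sub_eq_zero.mp hab0
    rw [ha, hb] at h
    have := congrArg (fun w => y - w) h
    simpa using this
  refine ⟨hΦeq, ?_⟩
  have hx : obj Φ L A y lam x = (1/2) * ‖a‖^2 + lam * A (L' x) := rfl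
  have hxs : obj Φ L A y lam xs = (1/2) * ‖b‖^2 + lam * A (L' xs) := rfl
  have hnorm : ‖a‖ = ‖b‖ := by rw [ha, hb, hΦeq]
  rw [hx, hxs, hnorm] at hobj
  have : lam * A (L' x) = lam * A (L' xs) := by linarith
  exact mul_left_cancel₀ hlam.ne' this

end fit


lemma dualNorm_zero_le_one {n : ℕ} (A : Euc n → ℝ) : dualNorm A (0 : Euc n) ≤ 1 := by
  apply Real.sSup_le _ zero_le_one
  rintro r ⟨v, _, rfl⟩
  simp


set_option maxHeartbeats 1000000 in
theorem stmt2 {N M P : ℕ} (Φ : Euc N →L[ℝ] Euc M) (L : Euc P →L[ℝ] Euc N)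
    (A : Euc P → ℝ) (hA : IsNorm A) (lam : ℝ) (hlam : 0 < lam) (y : Euc M)
    (xs : Euc N) (hmin : ∀ x, obj Φ L A y lam xs ≤ obj Φ L A y lam x)
    (T : Submodule ℝ (Euc P)) (e : Euc P)
    (hdec : Decomposable A (ContinuousLinearMap.adjoint L xs) T e)
    (V W : Submodule ℝ (Euc P))
    (horth : ∀ v ∈ V, ∀ w ∈ W, ⟪v, w⟫ = (0 : ℝ))
    (hsum : V ⊔ W = Tᗮ)
    (hsep : ∀ u : Euc P, A (proj Tᗮ u) = A (proj V u) + A (proj W u))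
    (η : Euc M) (α : Euc P) (hSC : SC Φ L A xs η α)
    (hsat : dualNorm A (proj V α) < 1)
    (hinj : ∀ h : Euc N, Φ h = 0 → proj V (ContinuousLinearMap.adjoint L h) = 0 → h = 0) :
    ∀ x : Euc N, (∀ z, obj Φ L A y lam x ≤ obj Φ L A y lam z) → x = xs := by
  intro x hmin'
  set L' := ContinuousLinearMap.adjoint L with hL'
  obtain ⟨hΦeq, hAeq⟩ := equal_fit Φ L A hA hlam y hmin hmin'
  set h := x - xs with hh
  set z := L' h with hz
  have hΦh : Φ h = 0 := by rw [hh, map_sub, hΦeq, sub_self]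
  -- ⟪α, z⟫ = 0
  have hαz : ⟪α, z⟫ = 0 := by
    rw [hz, hL', ContinuousLinearMap.adjoint_inner_right, ← hSC.2.1,
      ContinuousLinearMap.adjoint_inner_left, hΦh, inner_zero_right]
  -- basic subdiff facts for α
  have hαsub : α ∈ {β : Euc P | proj T β = e ∧ dualNorm A (proj Tᗮ β) ≤ 1} := by
    rw [← hdec.2.1]; exact hSC.1
  obtain ⟨hαT, hαS⟩ := hαsub
  have hWsub : W ≤ Tᗮ := hsum ▸ le_sup_right
  -- step: A (proj Tᗮ z) ≤ ⟪proj Tᗮ α, z⟫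
  have hzz : L' x - L' xs = z := by rw [hz, hh, map_sub]
  have hstep : A (proj Tᗮ z) ≤ ⟪proj Tᗮ α, z⟫ := by
    have hzS : proj Tᗮ z ∈ Tᗮ := proj_mem _ _
    rw [hdec.2.2 _ hzS]
    apply csSup_le
    · exact ⟨0, 0, Submodule.zero_mem _, dualNorm_zero_le_one A, by simp⟩
    rintro r ⟨v, hvS, hv1, rfl⟩
    have hvz : ⟪v, proj Tᗮ z⟫ = ⟪v, z⟫ := (inner_eq_inner_proj hvS z).symm
    rw [hvz]
    have hβ : e + v ∈ subdiff A (L' xs) := by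
      rw [hL', hdec.2.1]
      constructor
      · rw [map_add, proj_eq_self hdec.1, proj_eq_zero hvS, add_zero]
      · rw [map_add, proj_eq_zero (Submodule.le_orthogonal_orthogonal T hdec.1),
          proj_eq_self hvS, zero_add]
        exact hv1
    have hineq := hβ (L' x)
    rw [hzz] at hineq
    have hAeq' : A (L' x) = A (L' xs) := hAeq
    have h2 : ⟪e, z⟫ + ⟪v, z⟫ ≤ 0 := by
      rw [← inner_add_left]; linarith
    have hαdec : e + proj Tᗮ α = α := by
      conv_lhs => rw [← hαT]
      exact proj_add_proj_orthogonal T α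
    have h3 : ⟪e, z⟫ + ⟪proj Tᗮ α, z⟫ = 0 := by
      rw [← inner_add_left, hαdec]; exact hαz
    linarith
  -- split projections
  have hsplit : proj Tᗮ α = proj V α + proj W α := proj_sup_eq horth hsum α
  have hVpart : ⟪proj V α, z⟫ ≤ dualNorm A (proj V α) * A (proj V z) := by
    rw [inner_eq_inner_proj (proj_mem V α) z]
    exact inner_le_dualNorm_mul hA _ _
  have hWpart : ⟪proj W α, z⟫ ≤ A (proj W z) := by
    have hWz : proj W z ∈ Tᗮ := hWsub (proj_mem W z)
    have h1 : ⟪proj W α, z⟫ = ⟪proj W α, proj W z⟫ := inner_eq_inner_proj (proj_mem W α) z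
    have h2 : ⟪proj V α, proj W z⟫ = 0 := horth _ (proj_mem V α) _ (proj_mem W z)
    have h3 : ⟪proj Tᗮ α, proj W z⟫ = ⟪proj W α, proj W z⟫ := by
      rw [hsplit, inner_add_left, h2, zero_add]
    rw [h1, ← h3, hdec.2.2 _ hWz]
    exact le_csSup (decompSet_bddAbove hA _ _) ⟨proj Tᗮ α, proj_mem _ _, hαS, rfl⟩
  have hsepz := hsep z
  have hApV0 : A (proj V z) = 0 := by
    have htot : A (proj V z) + A (proj W z) ≤
        dualNorm A (proj V α) * A (proj V z) + A (proj W z) := by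
      rw [← hsepz]
      calc A (proj Tᗮ z) ≤ ⟪proj Tᗮ α, z⟫ := hstep
        _ = ⟪proj V α, z⟫ + ⟪proj W α, z⟫ := by rw [hsplit, inner_add_left]
        _ ≤ dualNorm A (proj V α) * A (proj V z) + A (proj W z) :=
            add_le_add hVpart hWpart
    nlinarith [hA.nonneg (proj V z), hsat]
  have hpV0 : proj V z = 0 := (hA.1 _).mp hApV0
  have := hinj h hΦh (by rw [← hz]; exact hpV0)
  rw [hh, sub_eq_zero] at this
  exact this
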